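/- If a finite family of unit vectors {φ_j}_{j=1}^m in a finite-dimensional complex Hilbert space is linearly independent, then there exist positive semidefinite operators E_1, …, E_m with E_1 + … + E_m ≤ 1 (as operators), ⟨φ_j, E_i φ_j⟩ = 0 for all j ≠ i, and ⟨φ_i, E_i φ_i⟩ > 0 for all i. -/

import Mathlib

open scoped ComplexInnerProductSpace ComplexOrder

/-- a linearly independent family of unit vectors in a
finite-dimensional complex Hilbert space admits an unambiguous-discrimination
sub-POVM: positive semidefinite `E i` with `∑ i, E i ≤ 1`,
`⟨φ j, E i φ j⟩ = 0` for `j ≠ i`, and `⟨φ i, E i φ i⟩ > 0`. -/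
theorem stmt5 {H : Type*} [NormedAddCommGroup H] [InnerProductSpace ℂ H]
    [FiniteDimensional ℂ H]
    (m : ℕ) (φ : Fin m → H) (hφ : ∀ j, ‖φ j‖ = 1)
    (hli : LinearIndependent ℂ φ) :
    ∃ E : Fin m → H →ₗ[ℂ] H,
      (∀ i (x : H), 0 ≤ ⟪x, E i x⟫) ∧
      (∀ x : H, 0 ≤ ⟪x, x⟫ - ⟪x, (∑ i, E i) x⟫) ∧
      (∀ i j, j ≠ i → ⟪φ j, E i (φ j)⟫ = 0) ∧
      (∀ i, 0 < ⟪φ i, E i (φ i)⟫) := by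
  classical
  set K : Fin m → Submodule ℂ H := fun i => Submodule.span ℂ (φ '' {i}ᶜ) with hKdef
  set ψ : Fin m → H := fun i => φ i - (Submodule.orthogonalProjectionOnto (K i) (φ i) : H) with hψdef
  have hmem : ∀ i, ψ i ∈ (K i)ᗮ := fun i =>
    Submodule.sub_starProjection_mem_orthogonal _
  have hψφ : ∀ i j, j ≠ i → ⟪ψ i, φ j⟫ = 0 := by
    intro i j hj
    have hjK : φ j ∈ K i := Submodule.subset_span ⟨j, by simpa using hj, rfl⟩
    exact Submodule.inner_left_of_mem_orthogonal hjK (hmem i)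
  have hψne : ∀ i, ψ i ≠ 0 := by
    intro i h
    have : φ i ∈ K i := by
      have := sub_eq_zero.mp h
      rw [this]
      exact (Submodule.orthogonalProjectionOnto (K i) (φ i)).2
    exact hli.notMem_span_image (by simp) this
  have hψinner : ∀ i, ⟪ψ i, φ i⟫ = (‖ψ i‖ ^ 2 : ℝ) := by
    intro i
    have hp : (Submodule.orthogonalProjectionOnto (K i) (φ i) : H) ∈ K i :=
      (Submodule.orthogonalProjectionOnto (K i) (φ i)).2
    have : ⟪ψ i, (Submodule.orthogonalProjectionOnto (K i) (φ i) : H)⟫ = 0 :=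
      Submodule.inner_left_of_mem_orthogonal hp (hmem i)
    have hdecomp : φ i = ψ i + (Submodule.orthogonalProjectionOnto (K i) (φ i) : H) := by
      simp [hψdef]
    rw [hdecomp, inner_add_right, this, add_zero, inner_self_eq_norm_sq_to_K]
    norm_num
  set S : ℝ := ∑ i, ‖ψ i‖ ^ 2 with hSdef
  have hSnn : 0 ≤ S := Finset.sum_nonneg fun i _ => sq_nonneg _
  set c : ℝ := (S + 1)⁻¹ with hcdef
  have hcpos : 0 < c := inv_pos.mpr (by linarith)
  set E : Fin m → H →ₗ[ℂ] H :=
    fun i => (c : ℂ) • ((innerSL ℂ (ψ i)).toLinearMap.smulRight (ψ i)) with hEdef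
  have hEapp : ∀ i x, E i x = (c : ℂ) • (⟪ψ i, x⟫ • ψ i) := by
    intro i x; simp [hEdef]
  have hquad : ∀ i x, ⟪x, E i x⟫ = (c : ℂ) * (Complex.normSq ⟪ψ i, x⟫ : ℝ) := by
    intro i x
    rw [hEapp, inner_smul_right, inner_smul_right]
    rw [← inner_conj_symm x (ψ i)]
    rw [mul_comm (⟪ψ i, x⟫) _, ← Complex.normSq_eq_conj_mul_self]
  refine ⟨E, ?_, ?_, ?_, ?_⟩
  · intro i x
    rw [hquad]
    have : (0:ℝ) ≤ c * Complex.normSq ⟪ψ i, x⟫ :=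
      mul_nonneg hcpos.le (Complex.normSq_nonneg _)
    rw [show ((c:ℂ) * (Complex.normSq ⟪ψ i, x⟫ : ℝ)) =
      ((c * Complex.normSq ⟪ψ i, x⟫ : ℝ) : ℂ) by push_cast; ring]
    exact_mod_cast this
  · intro x
    have hsum : ⟪x, (∑ i, E i) x⟫ = ((∑ i, c * Complex.normSq ⟪ψ i, x⟫ : ℝ) : ℂ) := by
      rw [LinearMap.sum_apply, inner_sum]
      push_cast
      exact Finset.sum_congr rfl fun i _ => hquad i x
    rw [hsum]
    have hxx : ⟪x, x⟫ = ((‖x‖ ^ 2 : ℝ) : ℂ) := by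
      rw [inner_self_eq_norm_sq_to_K]; norm_cast
    rw [hxx]
    have hb : ∑ i, c * Complex.normSq ⟪ψ i, x⟫ ≤ ‖x‖ ^ 2 := by
      have h1 : ∀ i, Complex.normSq ⟪ψ i, x⟫ ≤ ‖ψ i‖ ^ 2 * ‖x‖ ^ 2 := by
        intro i
        have := norm_inner_le_norm (𝕜 := ℂ) (ψ i) x
        have h2 : Complex.normSq ⟪ψ i, x⟫ = ‖⟪ψ i, x⟫‖ ^ 2 := by
          rw [Complex.normSq_eq_norm_sq]
        rw [h2, ← mul_pow]
        exact pow_le_pow_left₀ (norm_nonneg _) this 2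
      calc ∑ i, c * Complex.normSq ⟪ψ i, x⟫
          ≤ ∑ i, c * (‖ψ i‖ ^ 2 * ‖x‖ ^ 2) := by
            exact Finset.sum_le_sum fun i _ => by
              exact mul_le_mul_of_nonneg_left (h1 i) hcpos.le
        _ = c * S * ‖x‖ ^ 2 := by rw [← Finset.mul_sum, ← Finset.sum_mul]; ring
        _ ≤ 1 * ‖x‖ ^ 2 := by
            apply mul_le_mul_of_nonneg_right _ (sq_nonneg _)
            rw [hcdef]
            rw [inv_mul_le_iff₀ (by linarith)]
            linarith
        _ = ‖x‖ ^ 2 := one_mul _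
    have : (0:ℝ) ≤ ‖x‖ ^ 2 - ∑ i, c * Complex.normSq ⟪ψ i, x⟫ := by linarith
    rw [← Complex.ofReal_sub]
    exact Complex.zero_le_real.mpr this
  · intro i j hj
    rw [hquad, hψφ i j hj]
    simp
  · intro i
    rw [hquad, hψinner]
    have hpos : (0:ℝ) < c * Complex.normSq ((‖ψ i‖ ^ 2 : ℝ) : ℂ) := by
      apply mul_pos hcpos
      rw [Complex.normSq_pos]
      simpa using pow_ne_zero 2 (norm_ne_zero_iff.mpr (hψne i))
    rw [show ((c:ℂ) * (Complex.normSq ((‖ψ i‖ ^ 2 : ℝ) : ℂ) : ℝ)) =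
      ((c * Complex.normSq ((‖ψ i‖ ^ 2 : ℝ) : ℂ) : ℝ) : ℂ) by push_cast; ring]
    exact_mod_cast hpos
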